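/- Let a_1,...,a_n and b_1,...,b_n be non-negative real numbers and s a positive integer. Then the sum over all pairs (i,j) of |b_j^s - a_i^s| is at least n·(Σ_j b_j^s) − (Σ_j b_j^{s−1})·(Σ_i a_i). -/
import Mathlib

theorem stmt_0 (n : ℕ) (a b : Fin n → ℝ) (ha : ∀ i, 0 ≤ a i) (hb : ∀ j, 0 ≤ b j)
    (s : ℕ) (hs : 1 ≤ s) :
    ∑ i, ∑ j, |b j ^ s - a i ^ s| ≥
      n * ∑ j, b j ^ s - (∑ j, b j ^ (s - 1)) * ∑ i, a i := by
  have key : ∀ i j, b j ^ s - b j ^ (s - 1) * a i ≤ |b j ^ s - a i ^ s| := by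
    intro i j
    have hpow : b j ^ (s - 1) * b j = b j ^ s := by
      rw [← pow_succ]; congr 1; omega
    rcases le_or_gt (a i) (b j) with h | h
    · have h1 : a i ^ s ≤ b j ^ (s - 1) * a i := by
        have : a i ^ s = a i ^ (s - 1) * a i := by rw [← pow_succ]; congr 1; omega
        rw [this]
        exact mul_le_mul_of_nonneg_right (pow_le_pow_left₀ (ha i) h _) (ha i)
      have h2 : a i ^ s ≤ b j ^ s := pow_le_pow_left₀ (ha i) h s
      rw [abs_of_nonneg (by linarith)]; linarith
    · have h1 : b j ^ s - b j ^ (s - 1) * a i ≤ 0 := by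
        have := mul_le_mul_of_nonneg_left h.le (pow_nonneg (hb j) (s - 1))
        linarith [hpow]
      exact h1.trans (abs_nonneg _)
  have h1 : (n : ℝ) * ∑ j, b j ^ s - (∑ j, b j ^ (s - 1)) * ∑ i, a i
      = ∑ i, ∑ j, (b j ^ s - b j ^ (s - 1) * a i) := by
    rw [Finset.sum_comm]
    simp [Finset.sum_sub_distrib, Finset.mul_sum, Finset.sum_mul, mul_comm]
  rw [ge_iff_le, h1]
  exact Finset.sum_le_sum fun i _ => Finset.sum_le_sum fun j _ => key i j
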